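/- Let K be a field, δ : K → K a derivation, and suppose P ∈ K[X] satisfies P(b) = 0 and P'(b) ≠ 0 for some b ∈ K. Then for every i ≥ 1, the element δⁱ(b) lies in the subfield of K generated by b together with all elements δʲ(c) where c ranges over the coefficients of P and j ≤ i. In particular, each δⁱ(b) can be written as Q_i/(P'(b))^{ℓ_i} for some ℓ_i ∈ ℕ and Q_i a polynomial expression in b and the δʲ(c). -/

import Mathlib

open Polynomial Finset

/-- If `b` is a simple root of `P`, then all the higher derivatives `δⁱ b` lie in the
subfield generated by `b` and the elements `δʲ c`, `j ≤ i`, `c` a coefficient of `P`. -/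
theorem iterate_deriv_root_mem_subfield {K : Type*} [Field K] (δ : K → K)
    (hadd : ∀ x y, δ (x + y) = δ x + δ y)
    (hmul : ∀ x y, δ (x * y) = δ x * y + x * δ y)
    (P : Polynomial K) (b : K) (hb : P.eval b = 0) (hb' : P.derivative.eval b ≠ 0) :
    ∀ i : ℕ, 1 ≤ i →
      δ^[i] b ∈ Subfield.closure
        ({b} ∪ {x : K | ∃ j ≤ i, ∃ k : ℕ, x = δ^[j] (P.coeff k)}) := by
  set F : ℕ → Subfield K := fun i => Subfield.closure
      ({b} ∪ {x : K | ∃ j ≤ i, ∃ k : ℕ, x = δ^[j] (P.coeff k)}) with hF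
  -- basic properties of δ
  have hd0 : δ 0 = 0 := by have h := hadd 0 0; rw [add_zero] at h; linear_combination -h
  have hd1 : δ 1 = 0 := by have h := hmul 1 1; rw [mul_one, one_mul, mul_one] at h; linear_combination -h
  have hdneg : ∀ x, δ (-x) = -δ x := by
    intro x; have h := hadd x (-x); rw [add_neg_cancel, hd0] at h; linear_combination -h
  have hdsum : ∀ (s : Finset ℕ) (f : ℕ → K), δ (∑ n ∈ s, f n) = ∑ n ∈ s, δ (f n) := by
    intro s f
    induction s using Finset.induction with
    | empty => simpa using hd0
    | insert _ _ hx ih => rw [Finset.sum_insert hx, Finset.sum_insert hx, hadd, ih]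
  have hdpow : ∀ (x : K) (n : ℕ), δ (x ^ n) = n * x ^ (n - 1) * δ x := by
    intro x n
    induction n with
    | zero => simpa using hd1
    | succ m ih =>
      rw [pow_succ, hmul, ih]
      cases m with
      | zero => simp
      | succ l =>
        push_cast [Nat.add_sub_cancel]
        ring
  -- the evaluation formula
  have heval : ∀ Q : Polynomial K, δ (Q.eval b) =
      (∑ n ∈ Q.support, δ (Q.coeff n) * b ^ n) + Q.derivative.eval b * δ b := by
    intro Q
    rw [eval_eq_sum, Polynomial.sum_def, hdsum, derivative_eval, Polynomial.sum_def,
      Finset.sum_mul]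
    rw [← Finset.sum_add_distrib]
    refine Finset.sum_congr rfl fun n _ => ?_
    rw [hmul, hdpow]
    ring
  -- membership helpers
  have hb_mem : ∀ i, b ∈ F i := fun i => Subfield.subset_closure (Or.inl rfl)
  have hcoeff_mem : ∀ i j k, j ≤ i → δ^[j] (P.coeff k) ∈ F i := fun i j k hj =>
    Subfield.subset_closure (Or.inr ⟨j, hj, k, rfl⟩)
  have hmono : ∀ {i i' : ℕ}, i ≤ i' → F i ≤ F i' := by
    intro i i' h
    refine Subfield.closure_mono ?_
    rintro x (rfl | ⟨j, hj, k, rfl⟩)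
    · exact Or.inl rfl
    · exact Or.inr ⟨j, hj.trans h, k, rfl⟩
  -- the first derivative
  have hDb : δ b ∈ F 1 := by
    have h0 := heval P
    rw [hb, hd0] at h0
    have h1 : δ b = (-(∑ n ∈ P.support, δ (P.coeff n) * b ^ n)) / P.derivative.eval b := by
      rw [eq_div_iff hb']
      linear_combination -h0
    rw [h1]
    refine Subfield.div_mem _ (Subfield.neg_mem _ (Subfield.sum_mem _ fun n _ => ?_)) ?_
    · exact Subfield.mul_mem _ (hcoeff_mem 1 1 n le_rfl) (Subfield.pow_mem _ (hb_mem 1) n)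
    · rw [derivative_eval, Polynomial.sum_def]
      refine Subfield.sum_mem _ fun n _ => ?_
      exact Subfield.mul_mem _
        (Subfield.mul_mem _ (hcoeff_mem 1 0 n (by norm_num)) (natCast_mem _ n))
        (Subfield.pow_mem _ (hb_mem 1) (n - 1))
  -- derivation step: F i goes to F (i+1)
  have hstep : ∀ (i : ℕ) (x : K), x ∈ F i → δ x ∈ F (i + 1) := by
    intro i x hx
    induction hx using Subfield.closure_induction with
    | mem y hy =>
      rcases hy with rfl | ⟨j, hj, k, rfl⟩
      · exact hmono (by omega) hDb
      · rw [← Function.iterate_succ_apply' δ j]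
        exact hcoeff_mem (i + 1) (j + 1) k (by omega)
    | one => rw [hd1]; exact Subfield.zero_mem _
    | add x y hx hy ihx ihy => rw [hadd]; exact Subfield.add_mem _ ihx ihy
    | neg x hx ihx => rw [hdneg]; exact Subfield.neg_mem _ ihx
    | inv x hx ihx =>
      rcases eq_or_ne x 0 with rfl | hx0
      · rw [inv_zero, hd0]; exact Subfield.zero_mem _
      · have h1 : δ (x * x⁻¹) = 0 := by rw [mul_inv_cancel₀ hx0, hd1]
        rw [hmul] at h1
        have hxx : x * x⁻¹ = 1 := mul_inv_cancel₀ hx0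
        have h2 : δ x⁻¹ = -(δ x) * (x⁻¹ * x⁻¹) := by
          linear_combination x⁻¹ * h1 - δ x⁻¹ * hxx
        rw [h2]
        have hxm : x ∈ F (i + 1) := hmono (by omega) hx
        exact Subfield.mul_mem _ (Subfield.neg_mem _ ihx)
          (Subfield.mul_mem _ (Subfield.inv_mem _ hxm) (Subfield.inv_mem _ hxm))
    | mul x y hx hy ihx ihy =>
      rw [hmul]
      exact Subfield.add_mem _
        (Subfield.mul_mem _ ihx (hmono (by omega) hy))
        (Subfield.mul_mem _ (hmono (by omega) hx) ihy)
  intro i hi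
  induction i, hi using Nat.le_induction with
  | base => rw [Function.iterate_one]; exact hDb
  | succ n hn ih =>
    rw [Function.iterate_succ_apply' δ n]
    exact hstep n _ ih
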